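/- Every connected subspace of an essentially connected space is essentially connected. -/

import Mathlib

open Set TopologicalSpace Topology

/-- A topology is essentially connected if it is connected and every connected expansion
(finer topology) has the same connected subsets. -/
def EssentiallyConnected {X : Type*} (t : TopologicalSpace X) : Prop :=
  @ConnectedSpace X t ∧ ∀ s : TopologicalSpace X, s ≤ t → @ConnectedSpace X s →
    ∀ C : Set X, @IsConnected X s C ↔ @IsConnected X t C

/-- every connected subspace of an essentially connected space is
essentially connected. -/
theorem stmt_8 {X : Type*} [t : TopologicalSpace X] (h : EssentiallyConnected t)
    (Y : Set X) (hY : ConnectedSpace Y) :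
    EssentiallyConnected (TopologicalSpace.induced (fun y : Y => (y : X)) t) := by
  classical
  set i : Y → X := fun y : Y => (y : X) with hi
  have hconnX : @ConnectedSpace X t := h.1
  constructor
  · exact hY
  · intro s hs hsconn C
    set W : Set X := (closure Y)ᶜ with hW
    have hWopen : IsOpen W := isClosed_closure.isOpen_compl
    set S : Set (Set X) := {A | ∃ V : Set Y, IsOpen[s] V ∧ A = (i '' V) ∪ W} with hS
    set gens : Set (Set X) := {A | IsOpen A} ∪ S with hgens
    have himgY : ∀ V : Set Y, i '' V ⊆ Y := by
      rintro V x ⟨y, _, rfl⟩; exact y.2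
    have himgW : ∀ V : Set Y, i '' V ∩ W = ∅ := by
      intro V
      apply Set.eq_empty_of_forall_notMem
      rintro x ⟨hx1, hx2⟩
      exact hx2 (subset_closure (himgY V hx1))
    have hpreW : i ⁻¹' W = ∅ := by
      apply Set.eq_empty_of_forall_notMem
      intro y hy
      exact hy (subset_closure y.2)
    -- (TopologicalSpace.generateFrom gens) is finer than t
    have hle : TopologicalSpace.generateFrom gens ≤ t := by
      conv_rhs => rw [← t.generateFrom_setOf_isOpen]
      exact TopologicalSpace.generateFrom_anti (by
        rw [hgens]; exact Set.subset_union_left)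
    -- (TopologicalSpace.generateFrom gens) induces s on Y
    have hind : TopologicalSpace.induced i (TopologicalSpace.generateFrom gens) = s := by
      rw [induced_generateFrom_eq]
      apply le_antisymm
      · rw [← s.generateFrom_setOf_isOpen]
        apply TopologicalSpace.generateFrom_anti
        intro V hV
        refine ⟨(i '' V) ∪ W, Or.inr ⟨V, hV, rfl⟩, ?_⟩
        rw [Set.preimage_union, hpreW, Set.union_empty,
          Set.preimage_image_eq _ Subtype.val_injective]
      · apply le_generateFrom
        rintro _ ⟨A, hA, rfl⟩
        rcases hA with hA | ⟨V, hV, rfl⟩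
        · have h1 : @IsOpen Y (TopologicalSpace.induced i t) (i ⁻¹' A) :=
            ⟨A, hA, rfl⟩
          exact h1.mono hs
        · rw [Set.preimage_union, hpreW, Set.union_empty,
            Set.preimage_image_eq _ Subtype.val_injective]
          exact hV
    -- key structure lemma for (TopologicalSpace.generateFrom gens)-open sets
    have key : ∀ A : Set X, TopologicalSpace.GenerateOpen gens A →
        ∀ x ∈ A, ∃ G : Set X, IsOpen G ∧ x ∈ G ∧ G ∩ W ⊆ A := by
      intro A hA
      induction hA with
      | basic A hA =>
        intro x hx
        rcases hA with hA | ⟨V, hV, rfl⟩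
        · exact ⟨A, hA, hx, Set.inter_subset_left⟩
        · exact ⟨Set.univ, isOpen_univ, trivial, by
            rw [Set.univ_inter]; exact Set.subset_union_right⟩
      | univ => exact fun x _ => ⟨Set.univ, isOpen_univ, trivial, fun z _ => trivial⟩
      | inter A B hA hB ihA ihB =>
        rintro x ⟨hxA, hxB⟩
        obtain ⟨G1, hG1, hxG1, hG1s⟩ := ihA x hxA
        obtain ⟨G2, hG2, hxG2, hG2s⟩ := ihB x hxB
        exact ⟨G1 ∩ G2, hG1.inter hG2, ⟨hxG1, hxG2⟩, fun z hz =>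
          ⟨hG1s ⟨hz.1.1, hz.2⟩, hG2s ⟨hz.1.2, hz.2⟩⟩⟩
      | sUnion T hT ih =>
        rintro x ⟨A, hAT, hxA⟩
        obtain ⟨G, hG, hxG, hGs⟩ := ih A hAT x hxA
        exact ⟨G, hG, hxG, fun z hz => ⟨A, hAT, hGs hz⟩⟩
    -- outside Y, (TopologicalSpace.generateFrom gens)-open sets contain t-open neighbourhoods
    have key2 : ∀ A : Set X, TopologicalSpace.GenerateOpen gens A →
        ∀ x ∈ A, x ∉ Y → ∃ G : Set X, IsOpen G ∧ x ∈ G ∧ G ⊆ A := by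
      intro A hA
      induction hA with
      | basic A hA =>
        intro x hx hxY
        rcases hA with hA | ⟨V, hV, rfl⟩
        · exact ⟨A, hA, hx, subset_rfl⟩
        · have hxW : x ∈ W := by
            rcases hx with hx | hx
            · exact absurd (himgY V hx) hxY
            · exact hx
          exact ⟨W, hWopen, hxW, Set.subset_union_right⟩
      | univ => exact fun x _ _ => ⟨Set.univ, isOpen_univ, trivial, subset_rfl⟩
      | inter A B hA hB ihA ihB =>
        rintro x ⟨hxA, hxB⟩ hxY
        obtain ⟨G1, hG1, hxG1, hG1s⟩ := ihA x hxA hxY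
        obtain ⟨G2, hG2, hxG2, hG2s⟩ := ihB x hxB hxY
        exact ⟨G1 ∩ G2, hG1.inter hG2, ⟨hxG1, hxG2⟩, fun z hz =>
          ⟨hG1s hz.1, hG2s hz.2⟩⟩
      | sUnion T hT ih =>
        rintro x ⟨A, hAT, hxA⟩ hxY
        obtain ⟨G, hG, hxG, hGs⟩ := ih A hAT x hxA hxY
        exact ⟨G, hG, hxG, fun z hz => ⟨A, hAT, hGs hz⟩⟩
    -- (TopologicalSpace.generateFrom gens)-open sets intersected with W are t-open
    have key1 : ∀ A : Set X, TopologicalSpace.GenerateOpen gens A →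
        IsOpen (A ∩ W) := by
      intro A hA
      induction hA with
      | basic A hA =>
        rcases hA with hA | ⟨V, hV, rfl⟩
        · exact hA.inter hWopen
        · rw [Set.union_inter_distrib_right, himgW, Set.empty_union]
          exact hWopen.inter hWopen
      | univ => rw [Set.univ_inter]; exact hWopen
      | inter A B hA hB ihA ihB =>
        have hAB : A ∩ B ∩ W = (A ∩ W) ∩ (B ∩ W) := by
          ext z; constructor
          · rintro ⟨⟨h1, h2⟩, h3⟩; exact ⟨⟨h1, h3⟩, ⟨h2, h3⟩⟩
          · rintro ⟨⟨h1, h3⟩, ⟨h2, _⟩⟩; exact ⟨⟨h1, h2⟩, h3⟩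
        rw [hAB]; exact ihA.inter ihB
      | sUnion T hT ih =>
        rw [Set.sUnion_eq_biUnion, Set.iUnion₂_inter]
        exact isOpen_biUnion ih
    -- Y is (TopologicalSpace.generateFrom gens)-preconnected
    have hIstar : @IsInducing Y X s (TopologicalSpace.generateFrom gens) i :=
      @Topology.IsInducing.mk Y X s (TopologicalSpace.generateFrom gens) i hind.symm
    have hpreY : @IsPreconnected X (TopologicalSpace.generateFrom gens) Y := by
      have h1 : @IsPreconnected Y s Set.univ :=
        @isPreconnected_univ Y s hsconn.toPreconnectedSpace
      have h2 := (@Topology.IsInducing.isPreconnected_image Y X s (TopologicalSpace.generateFrom gens)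
        Set.univ i hIstar).2 h1
      rwa [Set.image_univ, Subtype.range_coe] at h2
    -- closure of Y in (TopologicalSpace.generateFrom gens) equals closure of Y in t
    have hclosure : @closure X (TopologicalSpace.generateFrom gens) Y = closure Y := by
      apply le_antisymm
      · exact @closure_minimal X (TopologicalSpace.generateFrom gens) Y (closure Y)
          subset_closure (isClosed_closure.mono hle)
      · intro x hx
        rw [@mem_closure_iff X (TopologicalSpace.generateFrom gens) x Y]
        intro o ho hxo
        by_cases hxY : x ∈ Y
        · exact ⟨x, hxo, hxY⟩
        · obtain ⟨G, hG, hxG, hGsub⟩ := key2 o ho x hxo hxY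
          obtain ⟨z, hzG, hzY⟩ := mem_closure_iff.1 hx G hG hxG
          exact ⟨z, hGsub hzG, hzY⟩
    -- closure of Y in t is (TopologicalSpace.generateFrom gens)-preconnected
    have hpreCl : @IsPreconnected X (TopologicalSpace.generateFrom gens) (closure Y) := by
      have hc := @IsPreconnected.closure X (TopologicalSpace.generateFrom gens) Y hpreY
      rwa [hclosure] at hc
    have hYne : Y.Nonempty := by
      obtain ⟨y⟩ := hY.toNonempty
      exact ⟨y, y.2⟩
    -- main helper: a (TopologicalSpace.generateFrom gens)-clopen partition with closure Y on the left is trivial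
    have main : ∀ u v : Set X, IsOpen[(TopologicalSpace.generateFrom gens)] u → IsOpen[(TopologicalSpace.generateFrom gens)] v →
        Set.univ ⊆ u ∪ v → u ∩ v = ∅ → closure Y ⊆ u → v = ∅ := by
      intro u v hu hv hcov hdisj hclu
      have hvW : v ⊆ W := by
        intro z hz
        by_contra hzW
        have hzcl : z ∈ closure Y := not_not.1 hzW
        have hz2 : z ∈ u ∩ v := ⟨hclu hzcl, hz⟩
        rw [hdisj] at hz2
        exact hz2
      have hvt : IsOpen v := by
        have hv1 := key1 v hv
        rwa [Set.inter_eq_self_of_subset_left hvW] at hv1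
      have hut : IsOpen u := by
        rw [isOpen_iff_forall_mem_open]
        intro x hx
        obtain ⟨G, hG, hxG, hGs⟩ := key u hu x hx
        refine ⟨G, ?_, hG, hxG⟩
        intro z hz
        rcases hcov (Set.mem_univ z) with hzu | hzv
        · exact hzu
        · have hz2 : z ∈ u ∩ v := ⟨hGs ⟨hz, hvW hzv⟩, hzv⟩
          rw [hdisj] at hz2
          exact hz2.elim
      rcases (@isPreconnected_univ X t hconnX.toPreconnectedSpace).subset_or_subset
          hut hvt (Set.disjoint_iff_inter_eq_empty.2 hdisj) hcov with hXu | hXv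
      · apply Set.eq_empty_of_forall_notMem
        intro z hz
        have hz2 : z ∈ u ∩ v := ⟨hXu (Set.mem_univ z), hz⟩
        rw [hdisj] at hz2
        exact hz2
      · obtain ⟨y, hy⟩ := hYne
        have hy2 : y ∈ u ∩ v := ⟨hclu (subset_closure hy), hXv (Set.mem_univ y)⟩
        rw [hdisj] at hy2
        exact hy2.elim
    -- X is (TopologicalSpace.generateFrom gens)-preconnected
    have hpre : @IsPreconnected X (TopologicalSpace.generateFrom gens) Set.univ := by
      intro u v hu hv hcov hune hvne
      by_contra h0
      rw [Set.not_nonempty_iff_eq_empty, Set.univ_inter] at h0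
      have hclcov : closure Y ⊆ u ∪ v := fun z _ => hcov (Set.mem_univ z)
      rcases @IsPreconnected.subset_or_subset X (TopologicalSpace.generateFrom gens)
          (closure Y) u v hu hv (Set.disjoint_iff_inter_eq_empty.2 h0) hclcov hpreCl
          with hcl | hcl
      · obtain ⟨z, _, hzv⟩ := hvne
        have hv0 := main u v hu hv hcov h0 hcl
        rw [hv0] at hzv
        exact hzv
      · obtain ⟨z, _, hzu⟩ := hune
        have hu0 := main v u hv hu (by rwa [Set.union_comm])
          (by rwa [Set.inter_comm]) hcl
        rw [hu0] at hzu
        exact hzu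
    have hconnStar : @ConnectedSpace X (TopologicalSpace.generateFrom gens) :=
      @ConnectedSpace.mk X (TopologicalSpace.generateFrom gens) (@PreconnectedSpace.mk X (TopologicalSpace.generateFrom gens) hpre)
        hconnX.toNonempty
    have hiff := h.2 (TopologicalSpace.generateFrom gens) hle hconnStar
    -- transfer back to Y
    have hIt : @IsInducing Y X (TopologicalSpace.induced i t) t i :=
      @Topology.IsInducing.mk Y X (TopologicalSpace.induced i t) t i rfl
    have e1 : @IsConnected Y s C ↔ @IsConnected X (TopologicalSpace.generateFrom gens) (i '' C) := by
      unfold IsConnected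
      rw [Set.image_nonempty,
        @Topology.IsInducing.isPreconnected_image Y X s (TopologicalSpace.generateFrom gens) C i hIstar]
    have e2 : @IsConnected Y (TopologicalSpace.induced i t) C ↔
        @IsConnected X t (i '' C) := by
      unfold IsConnected
      rw [Set.image_nonempty,
        @Topology.IsInducing.isPreconnected_image Y X
          (TopologicalSpace.induced i t) t C i hIt]
    rw [e1, e2]
    exact hiff (i '' C)
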